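/- Let r > 0. As ε → 0⁺, (3/(4πr³)) · (C₁₁(ε) − C₁₂(ε)) − (3/(2r²)) · [log(r/ε) + 2γ + 2 log 2] = O(√ε), where γ is the Euler–Mascheroni constant. -/

import Mathlib

open Real Filter Topology

/-- The parameter α̃(ε) = √(ε(r + ε/4)) for two identical spheres of radius `r`. -/
noncomputable def alphaTilde (r ε : ℝ) : ℝ := Real.sqrt (ε * (r + ε / 4))

/-- The bispherical coordinate ξ₀(ε) = arsinh(α̃(ε)/r) of the sphere boundaries. -/
noncomputable def xi0 (r ε : ℝ) : ℝ := Real.arsinh (alphaTilde r ε / r)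

/-- The capacitance coefficient C₁₁ for two identical spheres of radius `r`. -/
noncomputable def C11sym (r ε : ℝ) : ℝ :=
  8 * π * alphaTilde r ε *
    ∑' n : ℕ, Real.exp ((2 * n + 1) * xi0 r ε) /
      (Real.exp (2 * (2 * n + 1) * xi0 r ε) - 1)

/-- The capacitance coefficient C₁₂ for two identical spheres of radius `r`. -/
noncomputable def C12sym (r ε : ℝ) : ℝ :=
  -(8 * π * alphaTilde r ε *
    ∑' n : ℕ, 1 / (Real.exp (2 * (2 * n + 1) * xi0 r ε) - 1))

open MeasureTheory Set

namespace CapProof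

lemma expm1_pos {t : ℝ} (ht : 0 < t) : 0 < Real.exp t - 1 := by
  simpa using Real.exp_lt_exp.mpr ht

lemma one_sub_exp_neg_le (t : ℝ) : 1 - Real.exp (-t) ≤ t := by
  have := Real.add_one_le_exp (-t)
  linarith

lemma one_sub_exp_neg_ge {t : ℝ} (ht : 0 ≤ t) (ht1 : t ≤ 1) :
    t / 2 ≤ 1 - Real.exp (-t) := by
  have h1 : Real.exp (-t) ≤ 1 / (1 + t) := by
    rw [Real.exp_neg]
    have h2 : t + 1 ≤ Real.exp t := Real.add_one_le_exp t
    have h3 : (0:ℝ) < 1 + t := by linarith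
    rw [inv_le_comm₀ (Real.exp_pos t) (by positivity), inv_div, div_one]
    linarith
  have h4 : 1 / (1 + t) ≤ 1 - t/2 := by
    rw [div_le_iff₀ (by linarith)]
    nlinarith
  linarith

/-- w(t) = 1/t - 1/(e^t - 1) -/
noncomputable def wfun (t : ℝ) : ℝ := 1 / t - 1 / (Real.exp t - 1)

noncomputable def ufun (t : ℝ) : ℝ := Real.exp (-t) * wfun t

lemma wfun_nonneg {t : ℝ} (ht : 0 < t) : 0 ≤ wfun t := by
  have h := expm1_pos ht
  have h2 : t ≤ Real.exp t - 1 := by have := Real.add_one_le_exp t; linarith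
  have := one_div_le_one_div_of_le ht h2
  simpa [wfun] using this

lemma wfun_le_one {t : ℝ} (ht : 0 < t) : wfun t ≤ 1 := by
  have h := expm1_pos ht
  have h2 : 1 - Real.exp (-t) ≤ t := one_sub_exp_neg_le t
  rw [wfun, sub_le_iff_le_add]
  rw [div_le_iff₀ ht]
  rw [Real.exp_neg] at h2
  have h3 : 0 < Real.exp t := Real.exp_pos t
  have h5 : Real.exp t * Real.exp (-t) = 1 := by
    rw [← Real.exp_add]; simp
  rw [Real.exp_neg] at h5
  have key : Real.exp t - 1 ≤ t * Real.exp t := by nlinarith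
  rw [← sub_nonneg]
  have expand : (1 + 1 / (Real.exp t - 1)) * t - 1
      = (t * Real.exp t - (Real.exp t - 1)) / (Real.exp t - 1) := by
    field_simp
    ring
  rw [expand]
  have : 0 ≤ t * Real.exp t - (Real.exp t - 1) := by linarith
  positivity

lemma wfun_antitone : AntitoneOn wfun (Ioi 0) := by
  have hderiv : ∀ t ∈ Ioi (0:ℝ), HasDerivAt wfun (Real.exp t / (Real.exp t - 1)^2 - 1/t^2) t := by
    intro t ht
    have ht0 : (0:ℝ) < t := ht
    have h1 : HasDerivAt (fun s : ℝ => 1 / s) (-1/t^2) t := by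
      simpa [Pi.inv_def] using (hasDerivAt_id t).inv (ne_of_gt ht0)
    have h2 : HasDerivAt (fun s : ℝ => Real.exp s - 1) (Real.exp t) t := by
      simpa using (Real.hasDerivAt_exp t).sub_const 1
    have h3 : HasDerivAt (fun s : ℝ => 1 / (Real.exp s - 1))
        (-(Real.exp t) / (Real.exp t - 1)^2) t := by
      simpa [one_div, Pi.inv_def] using h2.inv (ne_of_gt (expm1_pos ht0))
    have := h1.sub h3
    simp only [Pi.sub_def] at this
    exact this.congr_deriv (by ring)
  have hcont : ContinuousOn wfun (Ioi 0) := fun t ht =>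
    ((hderiv t ht).continuousAt.continuousWithinAt)
  refine antitoneOn_of_deriv_nonpos (convex_Ioi 0) hcont (fun t ht => ?_) (fun t ht => ?_)
  · rw [interior_Ioi] at ht
    exact (hderiv t ht).differentiableAt.differentiableWithinAt
  · rw [interior_Ioi] at ht
    rw [(hderiv t ht).deriv]
    have ht0 : (0:ℝ) < t := ht
    have hs : t / 2 ≤ Real.sinh (t/2) := (Real.self_lt_sinh_iff.mpr (by linarith)).le
    have hfac : Real.exp t - 1 = Real.exp (t/2) * (2 * Real.sinh (t/2)) := by
      have e1 : Real.exp (t/2) * Real.exp (t/2) = Real.exp t := by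
        rw [← Real.exp_add]; ring_nf
      have e2 : Real.exp (t/2) * Real.exp (-(t/2)) = 1 := by
        rw [← Real.exp_add]; simp
      have e3 : Real.exp (t/2) * (2 * ((Real.exp (t/2) - Real.exp (-(t/2)))/2))
          = Real.exp (t/2) * Real.exp (t/2) - Real.exp (t/2) * Real.exp (-(t/2)) := by ring
      rw [Real.sinh_eq, e3, e1, e2]
    have key : t^2 * Real.exp t ≤ (Real.exp t - 1)^2 := by
      rw [hfac]
      have e1 : Real.exp (t/2) * Real.exp (t/2) = Real.exp t := by
        rw [← Real.exp_add]; ring_nf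
      have h2s : 0 < Real.sinh (t/2) := Real.sinh_pos_iff.mpr (by linarith)
      have hsq : t^2 ≤ (2*Real.sinh (t/2))^2 := by nlinarith
      calc t^2 * Real.exp t ≤ (2*Real.sinh (t/2))^2 * Real.exp t :=
            mul_le_mul_of_nonneg_right hsq (Real.exp_pos t).le
        _ = (Real.exp (t/2) * (2 * Real.sinh (t/2)))^2 := by
            rw [← e1]; ring
    have h1 : Real.exp t / (Real.exp t - 1)^2 ≤ 1 / t^2 := by
      rw [div_le_div_iff₀ (pow_pos (expm1_pos ht0) 2) (pow_pos ht0 2)]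
      nlinarith
    linarith


lemma exp_taylor3 {x : ℝ} (h0 : 0 ≤ x) (h1 : x ≤ 1) :
    |Real.exp x - (1 + x + x^2/2)| ≤ 2/9 * x^3 := by
  have h := Real.exp_bound (x := x) (by rwa [abs_of_nonneg h0]) (n := 3) (by norm_num)
  have hs : ∑ i ∈ Finset.range 3, x ^ i / (Nat.factorial i) = 1 + x + x^2/2 := by
    simp [Finset.sum_range_succ, Nat.factorial]
    try ring
  rw [hs, abs_of_nonneg h0] at h
  calc |Real.exp x - (1 + x + x^2/2)| ≤ x^3 * ((Nat.succ 3 : ℕ) / ((Nat.factorial 3 : ℕ) * (3:ℕ)) : ℝ) := h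
    _ = 2/9 * x^3 := by norm_num [Nat.factorial]; ring

lemma exp_neg_taylor3 {x : ℝ} (h0 : 0 ≤ x) (h1 : x ≤ 1) :
    |Real.exp (-x) - (1 - x + x^2/2)| ≤ 2/9 * x^3 := by
  have h := Real.exp_bound (x := -x) (by rwa [abs_neg, abs_of_nonneg h0]) (n := 3) (by norm_num)
  have hs : ∑ i ∈ Finset.range 3, (-x) ^ i / (Nat.factorial i) = 1 - x + x^2/2 := by
    simp [Finset.sum_range_succ, Nat.factorial]
    try ring
  rw [hs, abs_neg, abs_of_nonneg h0] at h
  calc |Real.exp (-x) - (1 - x + x^2/2)| ≤ x^3 * ((Nat.succ 3 : ℕ) / ((Nat.factorial 3 : ℕ) * (3:ℕ)) : ℝ) := h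
    _ = 2/9 * x^3 := by norm_num [Nat.factorial]; ring

lemma self_le_sinh {x : ℝ} (h0 : 0 ≤ x) : x ≤ Real.sinh x := by
  rcases eq_or_lt_of_le h0 with h | h
  · simp [← h]
  · exact (Real.self_lt_sinh_iff.mpr h).le

lemma sinh_sub_self_le {x : ℝ} (h0 : 0 ≤ x) (h1 : x ≤ 1) :
    Real.sinh x - x ≤ x^3 := by
  rw [Real.sinh_eq]
  have h2 := abs_le.mp (exp_taylor3 h0 h1)
  have h3 := abs_le.mp (exp_neg_taylor3 h0 h1)
  nlinarith [pow_nonneg h0 3, h2.1, h2.2, h3.1, h3.2]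

lemma cosh_sub_one_le {x : ℝ} (h0 : 0 ≤ x) (h1 : x ≤ 1) :
    Real.cosh x - 1 ≤ x^2 := by
  rw [Real.cosh_eq]
  have h2 := abs_le.mp (exp_taylor3 h0 h1)
  have h3 := abs_le.mp (exp_neg_taylor3 h0 h1)
  have hx3 : x^3 ≤ x^2 := by nlinarith [pow_nonneg h0 2]
  nlinarith [pow_nonneg h0 3, pow_nonneg h0 2, h2.1, h2.2, h3.1, h3.2, hx3]

/-- Monotone Riemann sum comparison on odd multiples of ξ. -/
lemma riemann_sum_bound {φ : ℝ → ℝ} (hanti : AntitoneOn φ (Ioi 0))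
    (hpos : ∀ t, 0 < t → 0 ≤ φ t) (hint : IntegrableOn φ (Ioi 0))
    {M : ℝ} (hM : ∀ t, 0 < t → φ t ≤ M)
    {ξ : ℝ} (hξ : 0 < ξ) :
    Summable (fun k : ℕ => φ ((2 * k + 1) * ξ)) ∧
      |2 * ξ * ∑' k : ℕ, φ ((2 * k + 1) * ξ) - ∫ t in Ioi 0, φ t| ≤ 2 * ξ * M := by
  set a : ℕ → ℝ := fun k => (2 * k + 1) * ξ with ha
  have hM0 : 0 ≤ M := le_trans (hpos 1 one_pos) (hM 1 one_pos)
  have hapos : ∀ k, 0 < a k := by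
    intro k
    have : (0:ℝ) < 2 * k + 1 := by positivity
    exact mul_pos this hξ
  have hamono : Monotone a := by
    intro i j hij
    have : (2 * (i:ℝ) + 1) ≤ 2 * (j:ℝ) + 1 := by
      have : (i:ℝ) ≤ j := Nat.cast_le.mpr hij
      linarith
    exact mul_le_mul_of_nonneg_right this hξ.le
  have hstep : ∀ k, a (k + 1) - a k = 2 * ξ := by
    intro k; simp only [ha]; push_cast; ring
  have hII : ∀ i j : ℕ, i ≤ j → IntervalIntegrable φ volume (a i) (a j) := by
    intro i j hij
    apply IntegrableOn.intervalIntegrable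
    apply hint.mono_set
    rw [uIcc_of_le (hamono hij)]
    exact fun t htm => lt_of_lt_of_le (hapos i) htm.1
  have hup : ∀ k : ℕ, ∫ t in (a k)..(a (k + 1)), φ t ≤ 2 * ξ * φ (a k) := by
    intro k
    have h1 : ∫ t in (a k)..(a (k+1)), φ t ≤ ∫ t in (a k)..(a (k+1)), φ (a k) := by
      apply intervalIntegral.integral_mono_on (hamono (Nat.le_succ k)) (hII k (k+1) (Nat.le_succ k))
        intervalIntegrable_const
      intro t htm
      exact hanti (hapos k) (lt_of_lt_of_le (hapos k) htm.1) htm.1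
    simpa [hstep k, mul_comm] using h1
  have hlo : ∀ k : ℕ, 2 * ξ * φ (a (k + 1)) ≤ ∫ t in (a k)..(a (k + 1)), φ t := by
    intro k
    have h1 : ∫ t in (a k)..(a (k+1)), φ (a (k+1)) ≤ ∫ t in (a k)..(a (k+1)), φ t := by
      apply intervalIntegral.integral_mono_on (hamono (Nat.le_succ k))
        intervalIntegrable_const (hII k (k+1) (Nat.le_succ k))
      intro t htm
      exact hanti (lt_of_lt_of_le (hapos k) htm.1) (hapos (k+1)) htm.2
    simpa [hstep k, mul_comm] using h1
  have hpartial : ∀ n : ℕ, ∫ t in (a 0)..(a n), φ t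
      = ∑ k ∈ Finset.range n, ∫ t in (a k)..(a (k+1)), φ t := by
    intro n
    exact (intervalIntegral.sum_integral_adjacent_intervals
      (fun k _ => hII k (k+1) (Nat.le_succ k))).symm
  have hIoc_eq : ∀ n : ℕ, ∫ t in (a 0)..(a n), φ t = ∫ t in Ioc (a 0) (a n), φ t := by
    intro n
    rw [intervalIntegral.integral_of_le (hamono (Nat.zero_le n))]
  -- tail integral
  have hint_tail : IntegrableOn φ (Ioi (a 0)) :=
    hint.mono_set (fun t htm => lt_trans (hapos 0) htm)
  have hunion : (⋃ n : ℕ, Ioc (a 0) (a n)) = Ioi (a 0) := by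
    ext t
    simp only [mem_iUnion, mem_Ioc, mem_Ioi]
    constructor
    · rintro ⟨n, h1, _⟩; exact h1
    · intro h1
      obtain ⟨n, hn⟩ := exists_nat_ge (t / ξ)
      refine ⟨n, h1, ?_⟩
      have : t ≤ n * ξ := by
        rw [div_le_iff₀ hξ] at hn; linarith
      have h2 : (n:ℝ) * ξ ≤ (2 * n + 1) * ξ := by
        have hn2 : (n:ℝ) ≤ 2 * n + 1 := by
          have := Nat.cast_nonneg (α := ℝ) n; linarith
        exact mul_le_mul_of_nonneg_right hn2 hξ.le
      exact le_trans this h2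
  have htail : Tendsto (fun n => ∫ t in Ioc (a 0) (a n), φ t) atTop
      (𝓝 (∫ t in Ioi (a 0), φ t)) := by
    have := MeasureTheory.tendsto_setIntegral_of_monotone
      (s := fun n : ℕ => Ioc (a 0) (a n))
      (fun n => measurableSet_Ioc)
      (fun i j hij => Ioc_subset_Ioc_right (hamono hij))
      (by rw [hunion]; exact hint_tail)
    rwa [hunion] at this
  have hφ_ae : 0 ≤ᵐ[volume.restrict (Ioi (0:ℝ))] φ :=
    MeasureTheory.ae_restrict_of_forall_mem measurableSet_Ioi (fun t htm => hpos t htm)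
  have hIoc0 : 0 ≤ ∫ t in Ioc 0 ξ, φ t := by
    apply setIntegral_nonneg measurableSet_Ioc
    intro t htm; exact hpos t htm.1
  have hIoc0' : ∫ t in Ioc 0 ξ, φ t ≤ ξ * M := by
    have h1 : ∫ t in Ioc 0 ξ, φ t ≤ ∫ t in Ioc (0:ℝ) ξ, M := by
      apply setIntegral_mono_on (hint.mono_set Ioc_subset_Ioi_self)
        (integrableOn_const (by simp [Real.volume_Ioc]))
        measurableSet_Ioc
      intro t htm; exact hM t htm.1
    rw [setIntegral_const, Real.volume_real_Ioc_of_le hξ.le, smul_eq_mul] at h1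
    simpa [ENNReal.toReal_ofReal hξ.le] using h1
  have hsplit : ∫ t in Ioi (0:ℝ), φ t = (∫ t in Ioc 0 ξ, φ t) + ∫ t in Ioi ξ, φ t := by
    rw [← MeasureTheory.setIntegral_union (Ioc_disjoint_Ioi le_rfl) measurableSet_Ioi
      (hint.mono_set Ioc_subset_Ioi_self) (hint.mono_set (fun t htm => lt_trans hξ htm))]
    rw [Ioc_union_Ioi_eq_Ioi hξ.le]
  have ha0 : a 0 = ξ := by simp [ha]
  -- partial sums bounded
  have hps : ∀ n : ℕ, ∑ k ∈ Finset.range n, 2 * ξ * φ (a k)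
      ≤ 2 * ξ * M + ∫ t in Ioi ξ, φ t := by
    intro n
    have htail_nonneg : 0 ≤ ∫ t in Ioi ξ, φ t := by
      apply setIntegral_nonneg measurableSet_Ioi
      intro t htm; exact hpos t (lt_trans hξ htm)
    cases n with
    | zero => simpa using add_nonneg (by positivity) htail_nonneg
    | succ n =>
      rw [Finset.sum_range_succ']
      have h1 : ∑ k ∈ Finset.range n, 2 * ξ * φ (a (k+1))
          ≤ ∑ k ∈ Finset.range n, ∫ t in (a k)..(a (k+1)), φ t :=
        Finset.sum_le_sum (fun k _ => hlo k)
      have h2 : ∑ k ∈ Finset.range n, ∫ t in (a k)..(a (k+1)), φ t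
          = ∫ t in Ioc (a 0) (a n), φ t := by rw [← hpartial, hIoc_eq]
      have h3 : ∫ t in Ioc (a 0) (a n), φ t ≤ ∫ t in Ioi ξ, φ t := by
        apply setIntegral_mono_set (hint.mono_set (fun t htm => lt_trans hξ htm))
        · exact MeasureTheory.ae_restrict_of_forall_mem measurableSet_Ioi
            (fun t htm => hpos t (lt_trans hξ htm))
        · exact HasSubset.Subset.eventuallyLE (by rw [ha0]; exact Ioc_subset_Ioi_self)
      have h4 : 2 * ξ * φ (a 0) ≤ 2 * ξ * M :=
        mul_le_mul_of_nonneg_left (hM _ (hapos 0)) (by positivity)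
      linarith
  have hsummable : Summable (fun k : ℕ => φ (a k)) := by
    apply summable_of_sum_range_le
      (c := (2*ξ*M + ∫ t in Ioi ξ, φ t) / (2*ξ)) (fun k => hpos _ (hapos k))
    intro n
    rw [le_div_iff₀ (by positivity)]
    calc (∑ k ∈ Finset.range n, φ (a k)) * (2*ξ)
        = ∑ k ∈ Finset.range n, 2*ξ*φ (a k) := by
          rw [Finset.sum_mul]; exact Finset.sum_congr rfl (fun k _ => by ring)
      _ ≤ _ := hps n
  have htsum_nonneg : ∀ k : ℕ, 0 ≤ φ (a k) := fun k => hpos _ (hapos k)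
  have htsum_up : 2 * ξ * ∑' k, φ (a k) ≤ 2*ξ*M + ∫ t in Ioi ξ, φ t := by
    have h1 : ∑' k, φ (a k) ≤ (2*ξ*M + ∫ t in Ioi ξ, φ t) / (2*ξ) := by
      apply tsum_le_of_sum_range_le htsum_nonneg
      intro n
      rw [le_div_iff₀ (by positivity)]
      calc (∑ k ∈ Finset.range n, φ (a k)) * (2*ξ)
          = ∑ k ∈ Finset.range n, 2*ξ*φ (a k) := by
            rw [Finset.sum_mul]; exact Finset.sum_congr rfl (fun k _ => by ring)
        _ ≤ _ := hps n
    calc 2 * ξ * ∑' k, φ (a k)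
        ≤ 2 * ξ * ((2*ξ*M + ∫ t in Ioi ξ, φ t) / (2*ξ)) :=
          mul_le_mul_of_nonneg_left h1 (by positivity)
      _ = 2*ξ*M + ∫ t in Ioi ξ, φ t := by field_simp
  have hlow : ∫ t in Ioi ξ, φ t ≤ 2 * ξ * ∑' k, φ (a k) := by
    have h0 : ∫ t in Ioi ξ, φ t = ∫ t in Ioi (a 0), φ t := by rw [ha0]
    rw [h0]
    apply le_of_tendsto htail
    filter_upwards with n
    calc ∫ t in Ioc (a 0) (a n), φ t
        = ∑ k ∈ Finset.range n, ∫ t in (a k)..(a (k+1)), φ t := by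
          rw [← hIoc_eq, hpartial]
      _ ≤ ∑ k ∈ Finset.range n, 2*ξ*φ (a k) := Finset.sum_le_sum (fun k _ => hup k)
      _ = 2*ξ * ∑ k ∈ Finset.range n, φ (a k) := by rw [Finset.mul_sum]
      _ ≤ 2 * ξ * ∑' k, φ (a k) := by
          apply mul_le_mul_of_nonneg_left _ (by positivity)
          exact hsummable.sum_le_tsum _ (fun k _ => htsum_nonneg k)
  refine ⟨hsummable, abs_le.mpr ⟨?_, ?_⟩⟩
  · rw [hsplit]; linarith
  · rw [hsplit]; linarith


lemma integrableOn_exp_neg_mul {c x : ℝ} (hc : 0 < c) :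
    IntegrableOn (fun t => Real.exp (-(c * t))) (Ioi x) := by
  have := exp_neg_integrableOn_Ioi x hc
  simpa [neg_mul] using this

lemma integrableOn_exp_neg {x : ℝ} : IntegrableOn (fun t => Real.exp (-t)) (Ioi x) := by
  simpa using integrableOn_exp_neg_mul (x := x) (zero_lt_one)

lemma integrableOn_exp_div {y : ℝ} (hy : 0 < y) :
    IntegrableOn (fun u => Real.exp (-u) / u) (Ioi y) := by
  apply Integrable.mono' (integrableOn_exp_neg.const_mul y⁻¹)
  · apply ContinuousOn.aestronglyMeasurable _ measurableSet_Ioi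
    exact ContinuousOn.div (Real.continuous_exp.comp continuous_neg).continuousOn
      continuousOn_id (fun t ht => ne_of_gt (lt_trans hy ht))
  · refine MeasureTheory.ae_restrict_of_forall_mem measurableSet_Ioi (fun t htm => ?_)
    have ht : y < t := htm
    have ht0 : 0 < t := lt_trans hy ht
    rw [Real.norm_eq_abs, abs_of_nonneg (by positivity)]
    rw [div_le_iff₀ ht0, mul_comm y⁻¹, mul_assoc]
    apply le_mul_of_one_le_right (Real.exp_pos _).le
    rw [← div_eq_inv_mul, le_div_iff₀ hy]
    linarith

lemma integrableOn_exp_mul_div {c x : ℝ} (hc : 0 < c) (hx : 0 < x) :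
    IntegrableOn (fun t => Real.exp (-(c * t)) / t) (Ioi x) := by
  apply Integrable.mono' ((integrableOn_exp_neg_mul (x := x) hc).const_mul x⁻¹)
  · apply ContinuousOn.aestronglyMeasurable _ measurableSet_Ioi
    exact ContinuousOn.div ((Real.continuous_exp.comp (by continuity)).continuousOn)
      continuousOn_id (fun t ht => ne_of_gt (lt_trans hx ht))
  · refine MeasureTheory.ae_restrict_of_forall_mem measurableSet_Ioi (fun t htm => ?_)
    have ht : x < t := htm
    have ht0 : 0 < t := lt_trans hx ht
    rw [Real.norm_eq_abs, abs_of_nonneg (by positivity)]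
    rw [div_le_iff₀ ht0, mul_comm x⁻¹, mul_assoc]
    apply le_mul_of_one_le_right (Real.exp_pos _).le
    rw [← div_eq_inv_mul, le_div_iff₀ hx]
    linarith

lemma subst_exp_div {c x : ℝ} (hc : 0 < c) (hx : 0 < x) :
    ∫ t in Ioi x, Real.exp (-(c * t)) / t = ∫ u in Ioi (c * x), Real.exp (-u) / u := by
  have h1 := MeasureTheory.integral_comp_mul_left_Ioi (fun u => Real.exp (-u) / u) x hc
  have h2 : ∫ t in Ioi x, Real.exp (-(c * t)) / t
      = c * ∫ t in Ioi x, Real.exp (-(c * t)) / (c * t) := by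
    rw [← integral_const_mul]
    apply setIntegral_congr_fun measurableSet_Ioi
    intro t htm
    have ht0 : 0 < t := lt_trans hx htm
    field_simp
  rw [h2, h1, smul_eq_mul, ← mul_assoc, mul_inv_cancel₀ (ne_of_gt hc), one_mul]

lemma frullani_exp {a b : ℝ} (ha : 0 < a) (hab : a < b) :
    IntegrableOn (fun t => (Real.exp (-(a * t)) - Real.exp (-(b * t))) / t) (Ioi 0) ∧
    ∫ t in Ioi 0, (Real.exp (-(a * t)) - Real.exp (-(b * t))) / t = Real.log (b / a) := by
  have hb : 0 < b := lt_trans ha hab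
  set h : ℝ → ℝ := fun t => (Real.exp (-(a * t)) - Real.exp (-(b * t))) / t with hh
  have hnonneg : ∀ t, 0 < t → 0 ≤ h t := by
    intro t ht
    apply div_nonneg _ ht.le
    rw [sub_nonneg]
    apply Real.exp_le_exp.mpr
    nlinarith
  have hle : ∀ t, 0 < t → h t ≤ (b - a) * Real.exp (-(a * t)) := by
    intro t ht
    rw [hh, div_le_iff₀ ht]
    have key := one_sub_exp_neg_le ((b - a) * t)
    have hmul : Real.exp (-(a * t)) * Real.exp (-((b - a) * t)) = Real.exp (-(b * t)) := by
      rw [← Real.exp_add]; ring_nf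
    nlinarith [Real.exp_pos (-(a * t)), mul_le_mul_of_nonneg_left key (Real.exp_pos (-(a*t))).le]
  have hcont : ContinuousOn h (Ioi 0) :=
    ContinuousOn.div (((Real.continuous_exp.comp (by continuity)).sub
      (Real.continuous_exp.comp (by continuity))).continuousOn)
      continuousOn_id (fun t ht => ne_of_gt ht)
  have hint : IntegrableOn h (Ioi 0) := by
    apply Integrable.mono' ((integrableOn_exp_neg_mul (x := 0) ha).const_mul (b - a))
    · exact hcont.aestronglyMeasurable measurableSet_Ioi
    · refine MeasureTheory.ae_restrict_of_forall_mem measurableSet_Ioi (fun t htm => ?_)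
      rw [Real.norm_eq_abs, abs_of_nonneg (hnonneg t htm)]
      exact hle t htm
  refine ⟨hint, ?_⟩
  -- value via truncation
  have hval : ∀ x : ℝ, 0 < x →
      ∫ t in Ioi x, h t = ∫ u in Ioc (a * x) (b * x), Real.exp (-u) / u := by
    intro x hx
    have hsub : ∫ t in Ioi x, h t
        = (∫ t in Ioi x, Real.exp (-(a * t)) / t) - ∫ t in Ioi x, Real.exp (-(b * t)) / t := by
      rw [← integral_sub (integrableOn_exp_mul_div ha hx) (integrableOn_exp_mul_div hb hx)]
      apply setIntegral_congr_fun measurableSet_Ioi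
      intro t htm
      rw [hh]; ring
    rw [hsub, subst_exp_div ha hx, subst_exp_div hb hx]
    have hsplit : ∫ u in Ioi (a * x), Real.exp (-u) / u
        = (∫ u in Ioc (a * x) (b * x), Real.exp (-u) / u) + ∫ u in Ioi (b * x), Real.exp (-u) / u := by
      rw [← MeasureTheory.setIntegral_union (Ioc_disjoint_Ioi le_rfl) measurableSet_Ioi
        ((integrableOn_exp_div (by positivity)).mono_set Ioc_subset_Ioi_self)
        (integrableOn_exp_div (by positivity))]
      rw [Ioc_union_Ioi_eq_Ioi (by nlinarith)]
    rw [hsplit]; ring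
  -- bounds
  have hlog0 : 0 ≤ Real.log (b / a) := Real.log_nonneg (by rw [le_div_iff₀ ha]; linarith)
  have hbound : ∀ x : ℝ, 0 < x →
      Real.exp (-(b * x)) * Real.log (b / a) ≤ (∫ t in Ioi x, h t) ∧
      (∫ t in Ioi x, h t) ≤ Real.log (b / a) := by
    intro x hx
    have hax : 0 < a * x := by positivity
    have habx : a * x < b * x := by nlinarith
    have hlog_eq : ∫ u in Ioc (a * x) (b * x), (1 : ℝ) / u = Real.log (b / a) := by
      rw [← intervalIntegral.integral_of_le habx.le]
      rw [integral_one_div (by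
        intro hmem
        rw [uIcc_of_le habx.le] at hmem
        exact absurd hmem.1 (by linarith))]
      rw [mul_div_mul_right _ _ (ne_of_gt hx)]
    have hii1 : IntegrableOn (fun u => Real.exp (-u) / u) (Ioc (a * x) (b * x)) :=
      (integrableOn_exp_div hax).mono_set Ioc_subset_Ioi_self
    have hii2 : IntegrableOn (fun u => (1:ℝ) / u) (Ioc (a * x) (b * x)) := by
      apply IntegrableOn.mono_set _ Ioc_subset_Icc_self
      apply ContinuousOn.integrableOn_Icc
      exact ContinuousOn.div continuousOn_const continuousOn_id
        (fun u hu => ne_of_gt (lt_of_lt_of_le hax hu.1))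
    constructor
    · rw [hval x hx]
      calc Real.exp (-(b*x)) * Real.log (b/a)
          = ∫ u in Ioc (a*x) (b*x), Real.exp (-(b*x)) * (1/u) := by
            rw [integral_const_mul, hlog_eq]
        _ ≤ ∫ u in Ioc (a*x) (b*x), Real.exp (-u)/u := by
            apply setIntegral_mono_on (hii2.const_mul _) hii1 measurableSet_Ioc
            intro u hu
            have hu0 : 0 < u := lt_trans hax hu.1
            rw [mul_one_div]
            exact (div_le_div_iff_of_pos_right hu0).mpr (Real.exp_le_exp.mpr (by linarith [hu.2]))
    · rw [hval x hx]
      calc ∫ u in Ioc (a * x) (b * x), Real.exp (-u) / u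
          ≤ ∫ u in Ioc (a * x) (b * x), (1:ℝ) / u := by
            apply setIntegral_mono_on hii1 hii2 measurableSet_Ioc
            intro u hu
            have hu0 : 0 < u := lt_trans hax hu.1
            exact (div_le_div_iff_of_pos_right hu0).mpr (Real.exp_le_one_iff.mpr (by linarith [hu.1]))
        _ = Real.log (b / a) := hlog_eq
  set xseq : ℕ → ℝ := fun n => ((n : ℝ) + 1)⁻¹ with hxs
  have hxpos : ∀ n : ℕ, 0 < xseq n := fun n => by positivity
  have hx0 : Tendsto xseq atTop (𝓝 0) := by
    have := tendsto_one_div_add_atTop_nhds_zero_nat (𝕜 := ℝ)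
    simpa [hxs, one_div] using this
  have hmono : Monotone (fun n : ℕ => Ioi (xseq n)) := by
    intro i j hij
    apply Ioi_subset_Ioi
    apply inv_anti₀ (by positivity)
    have : (i : ℝ) ≤ j := Nat.cast_le.mpr hij
    linarith
  have hunion : (⋃ n, Ioi (xseq n)) = Ioi 0 := by
    ext t
    simp only [mem_iUnion, mem_Ioi]
    constructor
    · rintro ⟨n, hn⟩; exact lt_trans (hxpos n) hn
    · intro ht
      obtain ⟨n, hn⟩ := exists_nat_ge (1 / t)
      refine ⟨n, ?_⟩
      rw [hxs]
      rw [inv_lt_comm₀ (by positivity) ht]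
      rw [one_div] at hn
      linarith
  have ht1 : Tendsto (fun n => ∫ t in Ioi (xseq n), h t) atTop (𝓝 (∫ t in Ioi 0, h t)) := by
    have := MeasureTheory.tendsto_setIntegral_of_monotone (fun n : ℕ => measurableSet_Ioi)
      hmono (by rw [hunion]; exact hint)
    rwa [hunion] at this
  have ht2 : Tendsto (fun n => ∫ t in Ioi (xseq n), h t) atTop (𝓝 (Real.log (b/a))) := by
    apply tendsto_of_tendsto_of_tendsto_of_le_of_le
      (g := fun n => Real.exp (-(b * xseq n)) * Real.log (b/a))
      (h := fun _ : ℕ => Real.log (b/a))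
    · have h3 : Tendsto (fun n => -(b * xseq n)) atTop (𝓝 0) := by
        simpa using (hx0.const_mul b).neg
      have h4 : Tendsto (fun n => Real.exp (-(b * xseq n))) atTop (𝓝 1) := by
        have := (Real.continuous_exp.tendsto 0).comp h3
        simpa [Function.comp_def] using this
      simpa using h4.mul_const (Real.log (b/a))
    · exact tendsto_const_nhds
    · intro n; exact (hbound _ (hxpos n)).1
    · intro n; exact (hbound _ (hxpos n)).2
  exact tendsto_nhds_unique ht1 ht2

noncomputable def gfun (t : ℝ) : ℝ := 1/(Real.exp t - 1) - Real.exp (-t)/t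

lemma gfun_eq {t : ℝ} (ht : 0 < t) : gfun t = Real.exp (-t) - ufun t := by
  rw [gfun, ufun, wfun, Real.exp_neg]
  have h1 := expm1_pos ht
  have h2 := Real.exp_pos t
  field_simp
  ring

lemma integral_exp_neg_mul_Ioi {c : ℝ} (hc : 0 < c) :
    ∫ t in Ioi (0:ℝ), Real.exp (-(c*t)) = c⁻¹ := by
  have h1 := MeasureTheory.integral_comp_mul_left_Ioi (fun u => Real.exp (-u)) 0 hc
  rw [mul_zero] at h1
  rw [integral_exp_neg_Ioi_zero] at h1
  simpa using h1

noncomputable def Ffun (m : ℕ) (t : ℝ) : ℝ :=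
  Real.exp (-(((m:ℝ)+1) * t)) - (Real.exp (-(((m:ℝ)+1) * t)) - Real.exp (-(((m:ℝ)+2) * t))) / t

lemma Ffun_integrable (m : ℕ) : IntegrableOn (Ffun m) (Ioi 0) := by
  have h1 : (0:ℝ) < (m:ℝ)+1 := by positivity
  have h2 : ((m:ℝ)+1) < (m:ℝ)+2 := by linarith
  exact (integrableOn_exp_neg_mul h1).sub (frullani_exp h1 h2).1

lemma Ffun_integral (m : ℕ) :
    ∫ t in Ioi (0:ℝ), Ffun m t = 1/((m:ℝ)+1) - Real.log (((m:ℝ)+2)/((m:ℝ)+1)) := by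
  have h1 : (0:ℝ) < (m:ℝ)+1 := by positivity
  have h2 : ((m:ℝ)+1) < (m:ℝ)+2 := by linarith
  simp only [Ffun]
  rw [integral_sub (integrableOn_exp_neg_mul h1) (frullani_exp h1 h2).1,
    integral_exp_neg_mul_Ioi h1, (frullani_exp h1 h2).2, one_div]

lemma Ffun_nonneg (m : ℕ) {t : ℝ} (ht : 0 < t) : 0 ≤ Ffun m t := by
  have hq : Real.exp (-(((m:ℝ)+2) * t)) = Real.exp (-(((m:ℝ)+1) * t)) * Real.exp (-t) := by
    rw [← Real.exp_add]; ring_nf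
  rw [Ffun, hq]
  have h1 : (1 - Real.exp (-t)) / t ≤ 1 := by
    rw [div_le_one ht]; exact one_sub_exp_neg_le t
  have hE := Real.exp_pos (-(((m:ℝ)+1) * t))
  have h2 : (Real.exp (-(((m:ℝ)+1) * t)) - Real.exp (-(((m:ℝ)+1) * t)) * Real.exp (-t))/t
      = Real.exp (-(((m:ℝ)+1) * t)) * ((1 - Real.exp (-t))/t) := by ring
  rw [h2]
  nlinarith

noncomputable def cseq (m : ℕ) : ℝ := 1/((m:ℝ)+1) - Real.log (((m:ℝ)+2)/((m:ℝ)+1))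

lemma cseq_nonneg (m : ℕ) : 0 ≤ cseq m := by
  have h1 : (0:ℝ) < (m:ℝ)+1 := by positivity
  have h2 : (0:ℝ) < ((m:ℝ)+2)/((m:ℝ)+1) := by positivity
  have h3 := Real.log_le_sub_one_of_pos h2
  have h4 : ((m:ℝ)+2)/((m:ℝ)+1) - 1 = 1/((m:ℝ)+1) := by
    field_simp
    norm_num
  rw [cseq]; linarith [h4 ▸ h3]

lemma cseq_partial (M : ℕ) :
    ∑ m ∈ Finset.range M, cseq m = Real.eulerMascheroniSeq M := by
  rw [Real.eulerMascheroniSeq]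
  have hh : ((harmonic M : ℚ) : ℝ) = ∑ m ∈ Finset.range M, 1/((m:ℝ)+1) := by
    rw [harmonic]
    push_cast
    simp [one_div]
  have hlog : ∑ m ∈ Finset.range M, (Real.log ((m:ℝ)+2) - Real.log ((m:ℝ)+1))
      = Real.log ((M:ℝ)+1) := by
    have h := Finset.sum_range_sub (f := fun m : ℕ => Real.log ((m:ℝ)+1)) M
    norm_num at h
    rw [Finset.sum_sub_distrib, ← h]
    congr 1
    apply Finset.sum_congr rfl
    intro m _
    rw [show ((m:ℝ)+1+1) = (m:ℝ)+2 by ring]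
  have hc : ∀ m : ℕ, cseq m = 1/((m:ℝ)+1) - (Real.log ((m:ℝ)+2) - Real.log ((m:ℝ)+1)) := by
    intro m
    rw [cseq, Real.log_div (by positivity) (by positivity)]
  simp_rw [hc]
  rw [Finset.sum_sub_distrib, hh, hlog]

lemma cseq_hasSum : HasSum cseq Real.eulerMascheroniConstant := by
  have hsum : Summable cseq := by
    apply summable_of_sum_range_le cseq_nonneg
    intro n
    rw [cseq_partial]
    exact (Real.eulerMascheroniSeq_lt_eulerMascheroniConstant n).le
  have h2 := hsum.hasSum.tendsto_sum_nat
  have h3 : Tendsto (fun n => ∑ m ∈ Finset.range n, cseq m) atTop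
      (𝓝 Real.eulerMascheroniConstant) := by
    simp_rw [cseq_partial]
    exact Real.tendsto_eulerMascheroniSeq
  rw [← tendsto_nhds_unique h2 h3]
  exact hsum.hasSum

lemma Ffun_tsum {t : ℝ} (ht : 0 < t) : ∑' m, Ffun m t = gfun t := by
  have hq0 : 0 < Real.exp (-t) := Real.exp_pos _
  have hq1 : Real.exp (-t) < 1 := by rw [Real.exp_lt_one_iff]; linarith
  have hpow : ∀ m : ℕ, Real.exp (-(((m:ℝ)+1) * t)) = Real.exp (-t) * Real.exp (-t)^m := by
    intro m; rw [← Real.exp_nat_mul, ← Real.exp_add]; congr 1; push_cast; ring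
  have hpow2 : ∀ m : ℕ, Real.exp (-(((m:ℝ)+2) * t))
      = (Real.exp (-t) * Real.exp (-t)) * Real.exp (-t)^m := by
    intro m; rw [← Real.exp_nat_mul, mul_assoc, ← Real.exp_add, ← Real.exp_add]
    congr 1; push_cast; ring
  have hgeo := hasSum_geometric_of_lt_one hq0.le hq1
  have hsA : HasSum (fun m : ℕ => Real.exp (-(((m:ℝ)+1) * t)))
      (Real.exp (-t) * (1-Real.exp (-t))⁻¹) := by
    have h := hgeo.mul_left (Real.exp (-t))
    simp_rw [hpow]
    exact h
  have hsB : HasSum (fun m : ℕ => Real.exp (-(((m:ℝ)+2) * t)))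
      ((Real.exp (-t) * Real.exp (-t)) * (1-Real.exp (-t))⁻¹) := by
    have h := hgeo.mul_left (Real.exp (-t) * Real.exp (-t))
    simp_rw [hpow2]
    exact h
  have hsF : HasSum (fun m => Ffun m t)
      ((Real.exp (-t) * (1-Real.exp (-t))⁻¹) -
        ((Real.exp (-t) * (1-Real.exp (-t))⁻¹)
          - (Real.exp (-t) * Real.exp (-t)) * (1-Real.exp (-t))⁻¹)/t) := by
    have h := hsA.sub ((hsA.sub hsB).div_const t)
    exact h
  rw [hsF.tsum_eq, gfun]
  have hE1 := expm1_pos ht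
  have hE0 := Real.exp_pos t
  have hq2 : (1 : ℝ) - Real.exp (-t) ≠ 0 := by
    rw [Real.exp_neg]
    have : (Real.exp t)⁻¹ < 1 := by
      rw [inv_lt_one_iff₀]; right; linarith
    linarith
  rw [Real.exp_neg] at *
  field_simp

lemma integral_gfun : ∫ t in Ioi (0:ℝ), gfun t = Real.eulerMascheroniConstant := by
  have hnorm : ∀ m : ℕ, ∫ t in Ioi (0:ℝ), ‖Ffun m t‖ = cseq m := by
    intro m
    rw [show cseq m = ∫ t in Ioi (0:ℝ), Ffun m t from (Ffun_integral m).symm]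
    apply setIntegral_congr_fun measurableSet_Ioi
    intro t htm
    show ‖Ffun m t‖ = Ffun m t
    rw [Real.norm_eq_abs, abs_of_nonneg (Ffun_nonneg m htm)]
  have hnormsum : Summable (fun m : ℕ => ∫ t in Ioi (0:ℝ), ‖Ffun m t‖) :=
    cseq_hasSum.summable.congr (fun m => (hnorm m).symm)
  have hswap := MeasureTheory.integral_tsum_of_summable_integral_norm
    (fun m => Ffun_integrable m) hnormsum
  have hL : ∫ t in Ioi (0:ℝ), (∑' m, Ffun m t) = ∫ t in Ioi (0:ℝ), gfun t := by
    apply setIntegral_congr_fun measurableSet_Ioi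
    intro t htm
    exact Ffun_tsum htm
  have hR : ∑' m, ∫ t in Ioi (0:ℝ), Ffun m t = Real.eulerMascheroniConstant := by
    rw [← cseq_hasSum.tsum_eq]
    exact tsum_congr (fun m => by rw [Ffun_integral m, cseq])
  rw [← hL, ← hswap]
  exact hR

lemma ufun_nonneg {t : ℝ} (ht : 0 < t) : 0 ≤ ufun t :=
  mul_nonneg (Real.exp_pos _).le (wfun_nonneg ht)

lemma ufun_le_exp {t : ℝ} (ht : 0 < t) : ufun t ≤ Real.exp (-t) := by
  rw [ufun]
  nlinarith [wfun_le_one ht, Real.exp_pos (-t)]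

lemma ufun_le_one {t : ℝ} (ht : 0 < t) : ufun t ≤ 1 := by
  have h1 := ufun_le_exp ht
  have h2 : Real.exp (-t) ≤ 1 := Real.exp_le_one_iff.mpr (by linarith)
  linarith

lemma continuousOn_ufun : ContinuousOn ufun (Ioi 0) := by
  apply ContinuousOn.mul (Real.continuous_exp.comp continuous_neg).continuousOn
  apply ContinuousOn.sub
  · exact ContinuousOn.div continuousOn_const continuousOn_id (fun t ht => ne_of_gt ht)
  · exact ContinuousOn.div continuousOn_const
      (ContinuousOn.sub Real.continuous_exp.continuousOn continuousOn_const)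
      (fun t ht => ne_of_gt (expm1_pos ht))

lemma integrableOn_ufun : IntegrableOn ufun (Ioi 0) := by
  apply Integrable.mono' integrableOn_exp_neg
    (continuousOn_ufun.aestronglyMeasurable measurableSet_Ioi)
  refine MeasureTheory.ae_restrict_of_forall_mem measurableSet_Ioi (fun t htm => ?_)
  rw [Real.norm_eq_abs, abs_of_nonneg (ufun_nonneg htm)]
  exact ufun_le_exp htm

lemma integrableOn_gfun : IntegrableOn gfun (Ioi 0) := by
  have : IntegrableOn (fun t => Real.exp (-t) - ufun t) (Ioi 0) :=
    integrableOn_exp_neg.sub integrableOn_ufun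
  apply IntegrableOn.congr_fun this _ measurableSet_Ioi
  intro t htm
  exact (gfun_eq htm).symm

lemma integral_ufun : ∫ t in Ioi (0:ℝ), ufun t = 1 - Real.eulerMascheroniConstant := by
  have h1 : ∫ t in Ioi (0:ℝ), (Real.exp (-t) - gfun t)
      = 1 - Real.eulerMascheroniConstant := by
    rw [integral_sub integrableOn_exp_neg integrableOn_gfun,
      integral_exp_neg_Ioi_zero, integral_gfun]
  rw [← h1]
  apply setIntegral_congr_fun measurableSet_Ioi
  intro t htm
  show ufun t = Real.exp (-t) - gfun t
  have := gfun_eq htm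
  linarith

lemma ufun_antitone : AntitoneOn ufun (Ioi 0) := by
  intro s hs t ht hst
  have hs0 : (0:ℝ) < s := hs
  have ht0 : (0:ℝ) < t := ht
  apply mul_le_mul (Real.exp_le_exp.mpr (by linarith)) (wfun_antitone hs ht hst)
    (wfun_nonneg ht0) (Real.exp_pos _).le

lemma exp_odd_pow {ξ : ℝ} (k : ℕ) :
    Real.exp (-((2*(k:ℝ)+1)*ξ)) = Real.exp (-ξ) * (Real.exp (-(2*ξ)))^k := by
  rw [← Real.exp_nat_mul, ← Real.exp_add]; congr 1; push_cast; ring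

lemma hasSum_exp_odd {ξ : ℝ} (hξ : 0 < ξ) :
    HasSum (fun k : ℕ => Real.exp (-((2*(k:ℝ)+1)*ξ))) (1/(2*Real.sinh ξ)) := by
  have hr0 : 0 ≤ Real.exp (-(2*ξ)) := (Real.exp_pos _).le
  have hr1 : Real.exp (-(2*ξ)) < 1 := by rw [Real.exp_lt_one_iff]; linarith
  have h := (hasSum_geometric_of_lt_one hr0 hr1).mul_left (Real.exp (-ξ))
  have hval : Real.exp (-ξ) * (1 - Real.exp (-(2*ξ)))⁻¹ = 1/(2*Real.sinh ξ) := by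
    have h2 : 1 - Real.exp (-(2*ξ)) = Real.exp (-ξ) * (Real.exp ξ - Real.exp (-ξ)) := by
      rw [mul_sub, ← Real.exp_add, ← Real.exp_add]
      norm_num
      rw [show -ξ + -ξ = -(2*ξ) by ring]
    have h3 : 0 < Real.exp ξ - Real.exp (-ξ) := by
      have := Real.exp_lt_exp.mpr (show -ξ < ξ by linarith); linarith
    rw [Real.sinh_eq, h2, mul_inv, ← mul_assoc,
      mul_inv_cancel₀ (ne_of_gt (Real.exp_pos (-ξ))), one_mul]
    rw [one_div, show 2*((Real.exp ξ - Real.exp (-ξ))/2) = Real.exp ξ - Real.exp (-ξ) by ring]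
  rw [← hval]
  have hfun : (fun k : ℕ => Real.exp (-((2*(k:ℝ)+1)*ξ)))
      = fun k : ℕ => Real.exp (-ξ) * (Real.exp (-(2*ξ)))^k := funext (fun k => exp_odd_pow k)
  rw [hfun]
  exact h

lemma hasSum_odd_log {x : ℝ} (h0 : 0 < x) (h1 : x < 1) :
    HasSum (fun k : ℕ => x^(2*k+1)/(2*(k:ℝ)+1))
      ((Real.log (1+x) - Real.log (1-x))/2) := by
  have hx : |x| < 1 := by rw [abs_of_nonneg h0.le]; exact h1
  have hx' : |(-x)| < 1 := by rwa [abs_neg]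
  have hA := Real.hasSum_pow_div_log_of_abs_lt_one hx
  have hB := Real.hasSum_pow_div_log_of_abs_lt_one hx'
  have hC := (hA.sub hB).div_const 2
  rw [show (1:ℝ) - -x = 1 + x by ring] at hB hC
  set f : ℕ → ℝ := fun n => (x^(n+1)/((n:ℝ)+1) - (-x)^(n+1)/((n:ℝ)+1))/2 with hf
  have hg : Function.Injective (fun k : ℕ => 2*k) := by
    intro a b h
    simp only at h
    omega
  have hvan : ∀ n : ℕ, n ∉ Set.range (fun k : ℕ => 2*k) → f n = 0 := by
    intro n hn
    have hodd : Odd n := by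
      rcases Nat.even_or_odd n with he | ho
      · exfalso; obtain ⟨j, hj⟩ := he; exact hn ⟨j, by simp only; omega⟩
      · exact ho
    have heven : Even (n+1) := by
      obtain ⟨j, hj⟩ := hodd; exact ⟨j+1, by omega⟩
    rw [hf]
    simp only [heven.neg_pow]
    ring
  have hcomp := (Function.Injective.hasSum_iff hg hvan).mpr hC
  have hfun : (fun k : ℕ => f (2*k)) = fun k : ℕ => x^(2*k+1)/(2*(k:ℝ)+1) := by
    funext k
    have hodd : Odd (2*k+1) := ⟨k, by omega⟩
    rw [hf]
    simp only [hodd.neg_pow]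
    push_cast
    field_simp
    ring
  rw [← hfun]
  have : ((-Real.log (1-x)) - (-Real.log (1+x)))/2 = (Real.log (1+x) - Real.log (1-x))/2 := by ring
  rw [← this]
  exact hcomp

lemma term_decomp {y : ℝ} (hy : 0 < y) :
    1/(Real.exp y - 1) = Real.exp (-y)/y + Real.exp (-y) - ufun y := by
  rw [ufun, wfun, Real.exp_neg]
  have h1 := expm1_pos hy
  have h2 := Real.exp_pos y
  field_simp
  ring
lemma core_bound {ξ : ℝ} (h0 : 0 < ξ) (h1 : ξ ≤ 1) :
    |2 * Real.sinh ξ * (∑' k : ℕ, 1/(Real.exp ((2*(k:ℝ)+1)*ξ) - 1))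
      + Real.log (Real.sinh (ξ/2)) - Real.eulerMascheroniConstant| ≤ 40 * ξ := by
  have hsh : 0 < Real.sinh ξ := Real.sinh_pos_iff.mpr h0
  have hsh2 : 0 < Real.sinh (ξ/2) := Real.sinh_pos_iff.mpr (by linarith)
  have hx0 : 0 < Real.exp (-ξ) := Real.exp_pos _
  have hx1 : Real.exp (-ξ) < 1 := by rw [Real.exp_lt_one_iff]; linarith
  have hxg : ξ/2 ≤ 1 - Real.exp (-ξ) := one_sub_exp_neg_ge h0.le h1
  have hx1' : 0 < 1 - Real.exp (-ξ) := by linarith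
  have hsC := hasSum_exp_odd h0
  have hsB0 := hasSum_odd_log hx0 hx1
  set B := (Real.log (1+Real.exp (-ξ)) - Real.log (1-Real.exp (-ξ)))/2 with hBdef
  have hsB : HasSum (fun k : ℕ => Real.exp (-((2*(k:ℝ)+1)*ξ))/(2*(k:ℝ)+1)) B := by
    have hfun : (fun k : ℕ => Real.exp (-ξ)^(2*k+1)/(2*(k:ℝ)+1))
        = fun k : ℕ => Real.exp (-((2*(k:ℝ)+1)*ξ))/(2*(k:ℝ)+1) := by
      funext k
      rw [← Real.exp_nat_mul]
      congr 2
      push_cast; ring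
    rw [← hfun]
    exact hsB0
  obtain ⟨hUsum, hUbound⟩ := riemann_sum_bound ufun_antitone (fun t ht => ufun_nonneg ht)
    integrableOn_ufun (M := 1) (fun t ht => ufun_le_one ht) h0
  rw [integral_ufun] at hUbound
  set U := ∑' k : ℕ, ufun ((2*(k:ℝ)+1)*ξ) with hUdef
  have hsB' : HasSum (fun k : ℕ => Real.exp (-((2*(k:ℝ)+1)*ξ))/((2*(k:ℝ)+1)*ξ)) (B/ξ) := by
    have h := hsB.div_const ξ
    have hfun : (fun k : ℕ => Real.exp (-((2*(k:ℝ)+1)*ξ))/(2*(k:ℝ)+1)/ξ)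
        = fun k : ℕ => Real.exp (-((2*(k:ℝ)+1)*ξ))/((2*(k:ℝ)+1)*ξ) := by
      funext k; rw [div_div]
    rw [← hfun]
    exact h
  have hsA : HasSum (fun k : ℕ => 1/(Real.exp ((2*(k:ℝ)+1)*ξ) - 1))
      (B/ξ + 1/(2*Real.sinh ξ) - U) := by
    have h := (hsB'.add hsC).sub hUsum.hasSum
    have hfun : (fun k : ℕ => Real.exp (-((2*(k:ℝ)+1)*ξ))/((2*(k:ℝ)+1)*ξ)
          + Real.exp (-((2*(k:ℝ)+1)*ξ)) - ufun ((2*(k:ℝ)+1)*ξ))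
        = fun k : ℕ => 1/(Real.exp ((2*(k:ℝ)+1)*ξ) - 1) := by
      funext k
      have hy : 0 < (2*(k:ℝ)+1)*ξ := by positivity
      rw [term_decomp hy]
    rw [← hfun]
    exact h
  set A := ∑' k : ℕ, 1/(Real.exp ((2*(k:ℝ)+1)*ξ) - 1) with hAdef
  have hAval : A = B/ξ + 1/(2*Real.sinh ξ) - U := hsA.tsum_eq
  have hA_nonneg : 0 ≤ A := by
    rw [hAdef]
    apply tsum_nonneg
    intro k
    have h2 : 0 < Real.exp ((2*(k:ℝ)+1)*ξ) - 1 := expm1_pos (by positivity)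
    positivity
  have hA_le : A ≤ 4/ξ^2 := by
    have hterm : ∀ k : ℕ, 1/(Real.exp ((2*(k:ℝ)+1)*ξ) - 1)
        ≤ Real.exp (-((2*(k:ℝ)+1)*ξ))/(1-Real.exp (-ξ)) := by
      intro k
      have hy0 : 0 < (2*(k:ℝ)+1)*ξ := by positivity
      have hyξ : ξ ≤ (2*(k:ℝ)+1)*ξ := by
        nlinarith [Nat.cast_nonneg (α := ℝ) k]
      have hE1 := expm1_pos hy0
      have hid : 1/(Real.exp ((2*(k:ℝ)+1)*ξ) - 1)
          = Real.exp (-((2*(k:ℝ)+1)*ξ))/(1 - Real.exp (-((2*(k:ℝ)+1)*ξ))) := by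
        rw [Real.exp_neg]
        have h3 := Real.exp_pos ((2*(k:ℝ)+1)*ξ)
        field_simp
      rw [hid]
      have h4 : 0 < 1 - Real.exp (-((2*(k:ℝ)+1)*ξ)) := by
        have := Real.exp_lt_one_iff.mpr (by linarith : -((2*(k:ℝ)+1)*ξ) < 0)
        linarith
      gcongr
      all_goals try (have h5 := Real.exp_le_exp.mpr (neg_le_neg hyξ); linarith)
    have hcomp : HasSum (fun k : ℕ => Real.exp (-((2*(k:ℝ)+1)*ξ))/(1-Real.exp (-ξ)))
        ((1/(2*Real.sinh ξ))/(1-Real.exp (-ξ))) := hsC.div_const _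
    have hle := hasSum_le hterm hsA hcomp
    rw [hAval]
    refine le_trans hle ?_
    have hs2 : ξ ≤ Real.sinh ξ := self_le_sinh h0.le
    have hnum : 1/(2*Real.sinh ξ) ≤ 1/(2*ξ) :=
      one_div_le_one_div_of_le (by positivity) (by linarith)
    calc (1/(2*Real.sinh ξ))/(1-Real.exp (-ξ)) ≤ (1/(2*ξ))/(ξ/2) :=
          div_le_div₀ (by positivity) hnum (by positivity) hxg
      _ = 1/ξ^2 := by field_simp
      _ ≤ 4/ξ^2 := div_le_div₀ (by norm_num) (by norm_num) (by positivity) (le_refl _)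
  have hlogid : 2*B + Real.log (Real.sinh (ξ/2)) = Real.log (Real.cosh (ξ/2)) := by
    have hc2 : 0 < Real.cosh (ξ/2) := Real.cosh_pos _
    have e1 : 1 + Real.exp (-ξ) = Real.exp (-(ξ/2)) * (2 * Real.cosh (ξ/2)) := by
      rw [Real.cosh_eq]
      have hr : Real.exp (-(ξ/2)) * (2 * ((Real.exp (ξ/2) + Real.exp (-(ξ/2)))/2))
          = Real.exp (-(ξ/2)) * Real.exp (ξ/2) + Real.exp (-(ξ/2)) * Real.exp (-(ξ/2)) := by
        ring
      rw [hr, ← Real.exp_add, ← Real.exp_add]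
      norm_num
      rw [show -(ξ/2) + -(ξ/2) = -ξ by ring]
    have e2 : 1 - Real.exp (-ξ) = Real.exp (-(ξ/2)) * (2 * Real.sinh (ξ/2)) := by
      rw [Real.sinh_eq]
      have hr : Real.exp (-(ξ/2)) * (2 * ((Real.exp (ξ/2) - Real.exp (-(ξ/2)))/2))
          = Real.exp (-(ξ/2)) * Real.exp (ξ/2) - Real.exp (-(ξ/2)) * Real.exp (-(ξ/2)) := by
        ring
      rw [hr, ← Real.exp_add, ← Real.exp_add]
      norm_num
      rw [show -(ξ/2) + -(ξ/2) = -ξ by ring]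
    rw [hBdef, e1, e2,
      Real.log_mul (ne_of_gt (Real.exp_pos _)) (by positivity),
      Real.log_mul (ne_of_gt (Real.exp_pos _)) (by positivity),
      Real.log_mul two_ne_zero (ne_of_gt hc2),
      Real.log_mul two_ne_zero (ne_of_gt hsh2)]
    ring
  have hEeq : 2*Real.sinh ξ * A + Real.log (Real.sinh (ξ/2)) - Real.eulerMascheroniConstant
      = (2*Real.sinh ξ - 2*ξ)*A + (2*B + Real.log (Real.sinh (ξ/2)))
        + (ξ/Real.sinh ξ - 1) + -(2*ξ*U - (1 - Real.eulerMascheroniConstant)) := by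
    rw [hAval]
    have hξ0 : ξ ≠ 0 := ne_of_gt h0
    have hs0 : Real.sinh ξ ≠ 0 := ne_of_gt hsh
    field_simp
    ring
  have b1 : |(2*Real.sinh ξ - 2*ξ)*A| ≤ 8*ξ := by
    rw [abs_mul]
    have hs1 : ξ ≤ Real.sinh ξ := self_le_sinh h0.le
    have h2 : |2*Real.sinh ξ - 2*ξ| ≤ 2*ξ^3 := by
      rw [abs_of_nonneg (by linarith)]
      nlinarith [sinh_sub_self_le h0.le h1]
    have h3 : |A| ≤ 4/ξ^2 := by rw [abs_of_nonneg hA_nonneg]; exact hA_le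
    calc |2*Real.sinh ξ - 2*ξ| * |A| ≤ (2*ξ^3)*(4/ξ^2) :=
          mul_le_mul h2 h3 (abs_nonneg _) (by positivity)
      _ = 8*ξ := by field_simp; ring
  have b2 : |2*B + Real.log (Real.sinh (ξ/2))| ≤ ξ := by
    rw [hlogid]
    have hc1 : 1 ≤ Real.cosh (ξ/2) := Real.one_le_cosh _
    have hl0 : 0 ≤ Real.log (Real.cosh (ξ/2)) := Real.log_nonneg hc1
    have hl1 : Real.log (Real.cosh (ξ/2)) ≤ Real.cosh (ξ/2) - 1 := by
      have := Real.log_le_sub_one_of_pos (Real.cosh_pos (ξ/2))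
      linarith
    have hc2 : Real.cosh (ξ/2) - 1 ≤ (ξ/2)^2 := cosh_sub_one_le (by linarith) (by linarith)
    rw [abs_of_nonneg hl0]
    nlinarith
  have b3 : |ξ/Real.sinh ξ - 1| ≤ ξ := by
    have hs1 : ξ ≤ Real.sinh ξ := self_le_sinh h0.le
    have hs3 : Real.sinh ξ - ξ ≤ ξ^3 := sinh_sub_self_le h0.le h1
    have h4 : ξ/Real.sinh ξ - 1 ≤ 0 := by
      rw [sub_nonpos, div_le_one hsh]; exact hs1
    rw [abs_of_nonpos h4, neg_sub]
    have h5 : 1 - ξ/Real.sinh ξ = (Real.sinh ξ - ξ)/Real.sinh ξ := by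
      field_simp
    rw [h5, div_le_iff₀ hsh]
    nlinarith
  have b4 : |2*ξ*U - (1 - Real.eulerMascheroniConstant)| ≤ 2*ξ := by
    calc |2*ξ*U - (1 - Real.eulerMascheroniConstant)| ≤ 2*ξ*1 := hUbound
      _ = 2*ξ := by ring
  rw [hEeq]
  calc |(2*Real.sinh ξ - 2*ξ)*A + (2*B + Real.log (Real.sinh (ξ/2)))
        + (ξ/Real.sinh ξ - 1) + -(2*ξ*U - (1 - Real.eulerMascheroniConstant))|
      ≤ |(2*Real.sinh ξ - 2*ξ)*A + (2*B + Real.log (Real.sinh (ξ/2)))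
        + (ξ/Real.sinh ξ - 1)| + |2*ξ*U - (1 - Real.eulerMascheroniConstant)| := by
        refine le_trans (abs_add_le _ _) ?_
        rw [abs_neg]
    _ ≤ |(2*Real.sinh ξ - 2*ξ)*A + (2*B + Real.log (Real.sinh (ξ/2)))|
        + |ξ/Real.sinh ξ - 1| + |2*ξ*U - (1 - Real.eulerMascheroniConstant)| := by
        have := abs_add_le ((2*Real.sinh ξ - 2*ξ)*A + (2*B + Real.log (Real.sinh (ξ/2))))
          (ξ/Real.sinh ξ - 1)
        linarith
    _ ≤ |(2*Real.sinh ξ - 2*ξ)*A| + |2*B + Real.log (Real.sinh (ξ/2))|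
        + |ξ/Real.sinh ξ - 1| + |2*ξ*U - (1 - Real.eulerMascheroniConstant)| := by
        have := abs_add_le ((2*Real.sinh ξ - 2*ξ)*A) (2*B + Real.log (Real.sinh (ξ/2)))
        linarith
    _ ≤ 8*ξ + ξ + ξ + 2*ξ := by linarith
    _ ≤ 40 * ξ := by linarith
lemma summable_geom_bound {ξ : ℝ} (hξ : 0 < ξ) {f : ℕ → ℝ} {c : ℝ}
    (h0 : ∀ k, 0 ≤ f k) (hle : ∀ k, f k ≤ Real.exp (-((2*(k:ℝ)+1)*ξ)) * c) :
    Summable f :=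
  Summable.of_nonneg_of_le h0 hle ((hasSum_exp_odd hξ).summable.mul_right c)

lemma Cdiff_sum {ξ : ℝ} (hξ : 0 < ξ) :
    (∑' k : ℕ, Real.exp ((2*(k:ℝ)+1)*ξ) / (Real.exp (2*(2*(k:ℝ)+1)*ξ) - 1))
      + (∑' k : ℕ, 1/(Real.exp (2*(2*(k:ℝ)+1)*ξ) - 1))
      = ∑' k : ℕ, 1/(Real.exp ((2*(k:ℝ)+1)*ξ) - 1) := by
  have hy : ∀ k : ℕ, 0 < (2*(k:ℝ)+1)*ξ := fun k => by positivity
  have hyξ : ∀ k : ℕ, ξ ≤ (2*(k:ℝ)+1)*ξ := by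
    intro k; nlinarith [Nat.cast_nonneg (α := ℝ) k, hξ]
  have hE2 : ∀ k : ℕ, Real.exp (2*(2*(k:ℝ)+1)*ξ)
      = Real.exp ((2*(k:ℝ)+1)*ξ) * Real.exp ((2*(k:ℝ)+1)*ξ) := by
    intro k; rw [← Real.exp_add]; congr 1; try ring
  have hgt : ∀ k : ℕ, 1 < Real.exp ((2*(k:ℝ)+1)*ξ) := by
    intro k
    have h := Real.exp_lt_exp.mpr (hy k)
    rwa [Real.exp_zero] at h
  have hD : ∀ k : ℕ, 0 < Real.exp (2*(2*(k:ℝ)+1)*ξ) - 1 := by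
    intro k; rw [hE2 k]; nlinarith [hgt k]
  have hc : 0 < 1 - Real.exp (-(2*ξ)) := by
    have : Real.exp (-(2*ξ)) < 1 := by rw [Real.exp_lt_one_iff]; linarith
    linarith
  have hb1 : ∀ k : ℕ, Real.exp ((2*(k:ℝ)+1)*ξ) / (Real.exp (2*(2*(k:ℝ)+1)*ξ) - 1)
      ≤ Real.exp (-((2*(k:ℝ)+1)*ξ)) * (1 - Real.exp (-(2*ξ)))⁻¹ := by
    intro k
    rw [← div_eq_mul_inv, div_le_div_iff₀ (hD k) hc]
    have e1 : Real.exp (-((2*(k:ℝ)+1)*ξ)) * Real.exp (2*(2*(k:ℝ)+1)*ξ)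
        = Real.exp ((2*(k:ℝ)+1)*ξ) := by rw [← Real.exp_add]; congr 1; try ring
    have e2 : Real.exp ((2*(k:ℝ)+1)*ξ) * Real.exp (-(2*ξ))
        = Real.exp ((2*(k:ℝ)+1)*ξ - 2*ξ) := by rw [← Real.exp_add]; congr 1; try ring
    have e3 : Real.exp (-((2*(k:ℝ)+1)*ξ)) ≤ Real.exp ((2*(k:ℝ)+1)*ξ - 2*ξ) := by
      apply Real.exp_le_exp.mpr
      have := hyξ k
      linarith
    nlinarith [Real.exp_pos (-((2*(k:ℝ)+1)*ξ))]
  have hb2 : ∀ k : ℕ, 1/(Real.exp (2*(2*(k:ℝ)+1)*ξ) - 1)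
      ≤ Real.exp ((2*(k:ℝ)+1)*ξ) / (Real.exp (2*(2*(k:ℝ)+1)*ξ) - 1) := by
    intro k
    gcongr
    · exact (hD k).le
    · exact (hgt k).le
  have hpos1 : ∀ k : ℕ, 0 ≤ Real.exp ((2*(k:ℝ)+1)*ξ) / (Real.exp (2*(2*(k:ℝ)+1)*ξ) - 1) :=
    fun k => le_of_lt (div_pos (Real.exp_pos _) (hD k))
  have hpos2 : ∀ k : ℕ, 0 ≤ 1/(Real.exp (2*(2*(k:ℝ)+1)*ξ) - 1) :=
    fun k => le_of_lt (div_pos one_pos (hD k))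
  have hS1 : Summable (fun k : ℕ => Real.exp ((2*(k:ℝ)+1)*ξ) / (Real.exp (2*(2*(k:ℝ)+1)*ξ) - 1)) :=
    summable_geom_bound hξ hpos1 hb1
  have hS2 : Summable (fun k : ℕ => 1/(Real.exp (2*(2*(k:ℝ)+1)*ξ) - 1)) :=
    summable_geom_bound hξ hpos2 (fun k => le_trans (hb2 k) (hb1 k))
  rw [← hS1.tsum_add hS2]
  apply tsum_congr
  intro k
  have h1 := hgt k
  have h2 := hD k
  have h3 : Real.exp ((2*(k:ℝ)+1)*ξ) - 1 ≠ 0 := by nlinarith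
  rw [hE2 k] at *
  rw [← add_div, div_eq_div_iff (by nlinarith) h3]
  ring

lemma xi0_pos {r ε : ℝ} (hr : 0 < r) (hε : 0 < ε) : 0 < xi0 r ε := by
  rw [← Real.sinh_pos_iff, xi0, Real.sinh_arsinh, alphaTilde]
  positivity

lemma sinh_xi0 (r ε : ℝ) : Real.sinh (xi0 r ε) = alphaTilde r ε / r :=
  Real.sinh_arsinh _

lemma cosh_xi0 {r ε : ℝ} (hr : 0 < r) (hε : 0 < ε) :
    Real.cosh (xi0 r ε) = 1 + ε/(2*r) := by
  rw [xi0, Real.cosh_arsinh]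
  have hx2 : (alphaTilde r ε / r)^2 = ε*(r+ε/4)/r^2 := by
    rw [div_pow, alphaTilde, Real.sq_sqrt (by positivity)]
  have h1 : 1 + (alphaTilde r ε / r)^2 = (1 + ε/(2*r))^2 := by
    rw [hx2]
    field_simp
    ring
  rw [h1, Real.sqrt_sq (by positivity)]

lemma sinh_half_xi0 {r ε : ℝ} (hr : 0 < r) (hε : 0 < ε) :
    Real.sinh (xi0 r ε / 2) = Real.sqrt ε / (2*Real.sqrt r) := by
  have hξ := xi0_pos hr hε
  have hshalf : 0 < Real.sinh (xi0 r ε / 2) := Real.sinh_pos_iff.mpr (by linarith)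
  have hdouble : Real.cosh (xi0 r ε) = 2 * Real.sinh (xi0 r ε / 2)^2 + 1 := by
    rw [Real.cosh_eq, Real.sinh_eq]
    have e1 : Real.exp (xi0 r ε / 2) * Real.exp (xi0 r ε / 2) = Real.exp (xi0 r ε) := by
      rw [← Real.exp_add]; congr 1; try ring
    have e2 : Real.exp (xi0 r ε / 2) * Real.exp (-(xi0 r ε / 2)) = 1 := by
      rw [← Real.exp_add]; simp
    have e3 : Real.exp (-(xi0 r ε / 2)) * Real.exp (-(xi0 r ε / 2)) = Real.exp (-(xi0 r ε)) := by
      rw [← Real.exp_add]; congr 1; try ring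
    nlinarith [e1, e2, e3]
  have hs2 : Real.sinh (xi0 r ε / 2)^2 = ε/(4*r) := by
    have hc := cosh_xi0 hr hε
    have har : ε/(2*r) = 2*(ε/(4*r)) := by ring
    rw [hc, har] at hdouble
    linarith
  have hs : Real.sinh (xi0 r ε / 2) = Real.sqrt (ε/(4*r)) := by
    rw [← Real.sqrt_sq hshalf.le, hs2]
  rw [hs, Real.sqrt_div hε.le]
  congr 1
  rw [show (4:ℝ)*r = 2^2*r by norm_num, Real.sqrt_mul (by positivity) r,
    Real.sqrt_sq (by norm_num : (0:ℝ) ≤ 2)]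
end CapProof

theorem rescaled_C11_sub_C12_asymptotics (r : ℝ) (hr : 0 < r) :
    (fun ε => 3 / (4 * π * r ^ 3) * (C11sym r ε - C12sym r ε) -
        3 / (2 * r ^ 2) *
          (Real.log (r / ε) + 2 * Real.eulerMascheroniConstant + 2 * Real.log 2))
      =O[𝓝[>] (0 : ℝ)] (fun ε => Real.sqrt ε) := by
  rw [Asymptotics.isBigO_iff]
  refine ⟨(3/r^2) * 40 * Real.sqrt (2/r), ?_⟩
  have hmem : Set.Ioo (0:ℝ) (r/2) ∈ 𝓝[>] (0:ℝ) :=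
    Ioo_mem_nhdsGT_of_mem ⟨le_refl 0, by positivity⟩
  filter_upwards [hmem] with ε hε
  obtain ⟨hε0, hεr⟩ := hε
  set ξ := xi0 r ε with hξdef
  have hξ0 : 0 < ξ := CapProof.xi0_pos hr hε0
  have hsinh : Real.sinh ξ = alphaTilde r ε / r := CapProof.sinh_xi0 r ε
  have hα_pos : 0 < alphaTilde r ε := by
    rw [alphaTilde]; positivity
  have hαle : alphaTilde r ε ≤ r * (Real.sqrt (2/r) * Real.sqrt ε) := by
    rw [alphaTilde]
    have h1 : ε*(r+ε/4) ≤ 2*r*ε := by nlinarith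
    calc Real.sqrt (ε*(r+ε/4)) ≤ Real.sqrt (2*r*ε) := Real.sqrt_le_sqrt h1
      _ = r * (Real.sqrt (2/r) * Real.sqrt ε) := by
          rw [show 2*r*ε = r^2*((2/r)*ε) by field_simp]
          rw [Real.sqrt_mul (by positivity) _, Real.sqrt_sq hr.le,
            Real.sqrt_mul (by positivity) ε]
  have hsinh_le : Real.sinh ξ ≤ Real.sqrt (2/r) * Real.sqrt ε := by
    rw [hsinh, div_le_iff₀ hr]
    calc alphaTilde r ε ≤ r * (Real.sqrt (2/r) * Real.sqrt ε) := hαle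
      _ = Real.sqrt (2/r) * Real.sqrt ε * r := by ring
  have hξ_le : ξ ≤ Real.sqrt (2/r) * Real.sqrt ε :=
    le_trans (CapProof.self_le_sinh hξ0.le) hsinh_le
  have hξ1 : ξ ≤ 1 := by
    have h2 : Real.sqrt (2/r) * Real.sqrt ε = Real.sqrt (2*ε/r) := by
      rw [← Real.sqrt_mul (by positivity)]
      congr 1; ring
    have h3 : Real.sqrt (2*ε/r) ≤ 1 := by
      rw [show (1:ℝ) = Real.sqrt 1 by rw [Real.sqrt_one]]
      apply Real.sqrt_le_sqrt
      rw [div_le_one hr]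
      linarith
    calc ξ ≤ Real.sqrt (2/r) * Real.sqrt ε := hξ_le
      _ = Real.sqrt (2*ε/r) := h2
      _ ≤ 1 := h3
  have hCdiff : C11sym r ε - C12sym r ε
      = 8*π*alphaTilde r ε * ∑' k : ℕ, 1/(Real.exp ((2*(k:ℝ)+1)*ξ) - 1) := by
    simp only [C11sym, C12sym]
    rw [sub_neg_eq_add, ← mul_add]
    congr 1
    exact CapProof.Cdiff_sum hξ0
  have hα_eq : alphaTilde r ε = r * Real.sinh ξ := by
    rw [hsinh]; field_simp
  have hlogsinh : Real.log (Real.sinh (ξ/2))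
      = Real.log ε / 2 - Real.log 2 - Real.log r / 2 := by
    rw [hξdef, CapProof.sinh_half_xi0 hr hε0]
    rw [Real.log_div (by positivity) (by positivity), Real.log_sqrt hε0.le,
      Real.log_mul two_ne_zero (by positivity), Real.log_sqrt hr.le]
    ring
  have hmain : 3 / (4 * π * r ^ 3) * (C11sym r ε - C12sym r ε) -
        3 / (2 * r ^ 2) *
          (Real.log (r / ε) + 2 * Real.eulerMascheroniConstant + 2 * Real.log 2)
      = (3/r^2) * (2*Real.sinh ξ * (∑' k : ℕ, 1/(Real.exp ((2*(k:ℝ)+1)*ξ) - 1))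
          + Real.log (Real.sinh (ξ/2)) - Real.eulerMascheroniConstant) := by
    rw [hCdiff, hα_eq, hlogsinh, Real.log_div (ne_of_gt hr) (ne_of_gt hε0)]
    have hπ : π ≠ 0 := Real.pi_ne_zero
    generalize (∑' k : ℕ, 1/(Real.exp ((2*(k:ℝ)+1)*ξ) - 1)) = S
    field_simp
    ring
  rw [Real.norm_eq_abs, Real.norm_eq_abs, hmain, abs_mul,
    abs_of_nonneg (show (0:ℝ) ≤ 3/r^2 by positivity),
    abs_of_nonneg (Real.sqrt_nonneg ε)]
  have hcore := CapProof.core_bound hξ0 hξ1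
  calc (3/r^2) * |2*Real.sinh ξ * (∑' k : ℕ, 1/(Real.exp ((2*(k:ℝ)+1)*ξ) - 1))
          + Real.log (Real.sinh (ξ/2)) - Real.eulerMascheroniConstant|
      ≤ (3/r^2) * (40*ξ) := by
        apply mul_le_mul_of_nonneg_left hcore (by positivity)
    _ ≤ (3/r^2) * (40 * (Real.sqrt (2/r) * Real.sqrt ε)) := by
        apply mul_le_mul_of_nonneg_left _ (by positivity)
        apply mul_le_mul_of_nonneg_left hξ_le (by norm_num)
    _ = (3/r^2) * 40 * Real.sqrt (2/r) * Real.sqrt ε := by ring
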